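/- Let p = t = 2/3 (the case k = 1 of the diagonal). Then the maximum of P(Σ c_i β_i ≥ 2/3) over nonnegative sequences (c_i) summing to 1 is attained by c_1 = c_2 = c_3 = 1/3, and this maximum equals P(Bin(3, 2/3) ≥ 2) = 20/27, which exceeds the bold play value p = 2/3. -/

import Mathlib

open MeasureTheory ProbabilityTheory
open scoped ENNReal Classical

section Pairs
variable {σ : Fin 3 → ℝ} {ci cj ε α : ℝ}

lemma pair_unique (hci : ε < ci) (hcj : ε < cj) (a b x y : Fin 3)
    (hab : ∀ k, σ k + (if a = k then ci else 0) + (if b = k then cj else 0) ∈ Set.Icc α (α + ε))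
    (hxy : ∀ k, σ k + (if x = k then ci else 0) + (if y = k then cj else 0) ∈ Set.Icc α (α + ε)) :
    (x = a ∧ y = b) ∨ (x = b ∧ y = a) := by
  have key : ∀ k, ((a = k ∧ b = k) ↔ (x = k ∧ y = k)) ∧ ((a = k ∨ b = k) ↔ (x = k ∨ y = k)) := by
    intro k
    have h1 := (hab k).1
    have h2 := (hab k).2
    have h3 := (hxy k).1
    have h4 := (hxy k).2
    split_ifs at h1 h2 h3 h4 with hak hbk hxk hyk <;>
      refine ⟨⟨fun h => ?_, fun h => ?_⟩, ⟨fun h => ?_, fun h => ?_⟩⟩ <;>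
      first | tauto | (exfalso; linarith)
  by_cases hab' : a = b
  · have h := (key a).1.mp ⟨rfl, hab'.symm⟩
    exact Or.inl ⟨h.1, h.2.trans hab'⟩
  · have hxa : x = a ∨ y = a := (key a).2.mp (Or.inl rfl)
    have hxb : x = b ∨ y = b := (key b).2.mp (Or.inr rfl)
    have hne : x ≠ y := by
      intro h
      have := (key x).1.mpr ⟨rfl, h.symm⟩
      exact hab' (this.1.trans this.2.symm)
    rcases hxa with h | h
    · rcases hxb with h' | h'
      · exact absurd (h.symm.trans h') hab'
      · exact Or.inl ⟨h, h'⟩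
    · rcases hxb with h' | h'
      · exact Or.inr ⟨h', h⟩
      · exact absurd (h.symm.trans h') hab'

lemma validPairs_card_le (hci : ε < ci) (hcj : ε < cj) :
    (Finset.univ.filter (fun ab : Fin 3 × Fin 3 => ∀ k,
      σ k + (if ab.1 = k then ci else 0) + (if ab.2 = k then cj else 0)
        ∈ Set.Icc α (α + ε))).card ≤ 2 := by
  set V := Finset.univ.filter (fun ab : Fin 3 × Fin 3 => ∀ k,
      σ k + (if ab.1 = k then ci else 0) + (if ab.2 = k then cj else 0)
        ∈ Set.Icc α (α + ε)) with hV
  rcases V.eq_empty_or_nonempty with h | ⟨⟨a, b⟩, hp⟩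
  · simp [h]
  · have hsub : V ⊆ {(a, b), (b, a)} := by
      intro ⟨x, y⟩ hx
      have h1 := (Finset.mem_filter.mp hp).2
      have h2 := (Finset.mem_filter.mp hx).2
      rcases pair_unique hci hcj a b x y h1 h2 with ⟨rfl, rfl⟩ | ⟨rfl, rfl⟩ <;>
        simp [Finset.mem_insert]
    refine (Finset.card_le_card hsub).trans ?_
    refine (Finset.card_insert_le _ _).trans ?_
    simp

end Pairs

section Counting
variable {n : ℕ} {d : Fin n → ℝ} {ε α : ℝ}

lemma window_card_le (i₀ j₀ : Fin n) (hij : i₀ ≠ j₀) (hdi : ε < d i₀) (hdj : ε < d j₀) :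
    (Finset.univ.filter (fun u : Fin n → Fin 3 => ∀ k,
        (∑ i, d i * (if u i = k then 1 else 0)) ∈ Set.Icc α (α + ε))).card
      ≤ 2 * 3 ^ (n - 2) := by
  classical
  set rest : Finset (Fin n) := Finset.univ \ {i₀, j₀} with hrest
  have hi₀ : i₀ ∉ rest := by simp [hrest]
  have hj₀ : j₀ ∉ rest := by simp [hrest]
  have hj₀i : j₀ ∉ insert i₀ rest := by simp [hrest, Finset.mem_insert, hij.symm]
  have huniv : insert j₀ (insert i₀ rest) = Finset.univ := by
    ext i; by_cases h1 : i = i₀ <;> by_cases h2 : i = j₀ <;> simp [hrest, h1, h2]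
  set WF := Finset.univ.filter (fun u : Fin n → Fin 3 => ∀ k,
        (∑ i, d i * (if u i = k then 1 else 0)) ∈ Set.Icc α (α + ε)) with hWF
  set restr : (Fin n → Fin 3) → (Fin n → Fin 3) :=
    fun u i => if i ∈ rest then u i else 0 with hrestr
  -- decompose the sum
  have hsum : ∀ (u : Fin n → Fin 3) (k : Fin 3),
      (∑ i, d i * (if u i = k then 1 else 0)) =
        (∑ i ∈ rest, d i * (if u i = k then 1 else 0))
          + (if u i₀ = k then d i₀ else 0) + (if u j₀ = k then d j₀ else 0) := by
    intro u k
    rw [show (Finset.univ : Finset (Fin n)) = insert j₀ (insert i₀ rest) from huniv.symm,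
      Finset.sum_insert hj₀i, Finset.sum_insert hi₀]
    by_cases h1 : u i₀ = k <;> by_cases h2 : u j₀ = k <;> simp [h1, h2] <;> ring
  have hfib : ∀ g ∈ WF.image restr, (WF.filter (fun u => restr u = g)).card ≤ 2 := by
    intro g hg
    set σf : Fin 3 → ℝ := fun k => ∑ i ∈ rest, d i * (if g i = k then 1 else 0) with hσ
    have hmapsto : ∀ u ∈ WF.filter (fun u => restr u = g),
        (u i₀, u j₀) ∈ (Finset.univ.filter (fun ab : Fin 3 × Fin 3 => ∀ k,
          σf k + (if ab.1 = k then d i₀ else 0) + (if ab.2 = k then d j₀ else 0)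
            ∈ Set.Icc α (α + ε))) := by
      intro u hu
      rw [Finset.mem_filter] at hu
      obtain ⟨hu1, hu2⟩ := hu
      rw [hWF, Finset.mem_filter] at hu1
      refine Finset.mem_filter.mpr ⟨Finset.mem_univ _, fun k => ?_⟩
      have h := hu1.2 k
      rw [hsum u k] at h
      have hr : (∑ i ∈ rest, d i * (if u i = k then 1 else 0)) = σf k := by
        apply Finset.sum_congr rfl
        intro i hi
        have : g i = u i := by rw [← hu2]; simp [hrestr, hi]
        rw [this]
      rwa [hr] at h
    have hinj : Set.InjOn (fun u : Fin n → Fin 3 => (u i₀, u j₀))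
        (WF.filter (fun u => restr u = g)) := by
      intro u hu v hv huv
      simp only [Finset.coe_filter, Set.mem_setOf_eq] at hu hv
      funext i
      by_cases h1 : i = i₀
      · subst h1; exact congrArg Prod.fst huv
      · by_cases h2 : i = j₀
        · subst h2; exact congrArg Prod.snd huv
        · have hi : i ∈ rest := by simp [hrest, h1, h2]
          have := hu.2.trans hv.2.symm
          have := congrFun this i
          simpa [hrestr, hi] using this
    calc (WF.filter (fun u => restr u = g)).card
        ≤ (Finset.univ.filter (fun ab : Fin 3 × Fin 3 => ∀ k,
            σf k + (if ab.1 = k then d i₀ else 0) + (if ab.2 = k then d j₀ else 0)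
              ∈ Set.Icc α (α + ε))).card :=
          Finset.card_le_card_of_injOn _ hmapsto hinj
      _ ≤ 2 := validPairs_card_le hdi hdj
  have h1 : WF.card ≤ 2 * (WF.image restr).card := Finset.card_le_mul_card_image _ 2 hfib
  have h2 : (WF.image restr).card ≤ 3 ^ (n - 2) := by
    have hinj2 : Set.InjOn (fun g : Fin n → Fin 3 => (fun i : {i // i ∈ rest} => g i.1))
        (WF.image restr) := by
      intro g hg g' hg' hgg
      simp only [Finset.coe_image, Set.mem_image] at hg hg'
      obtain ⟨u, _, rfl⟩ := hg
      obtain ⟨v, _, rfl⟩ := hg'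
      funext i
      by_cases hi : i ∈ rest
      · simpa [hrestr, hi] using congrFun hgg ⟨i, hi⟩
      · simp [hrestr, hi]
    calc (WF.image restr).card
        ≤ (Finset.univ : Finset ({i // i ∈ rest} → Fin 3)).card :=
          Finset.card_le_card_of_injOn _ (fun _ _ => Finset.mem_univ _) hinj2
      _ = 3 ^ rest.card := by
          simp [Finset.card_univ, Fintype.card_fun, Fintype.card_coe]
      _ ≤ 3 ^ (n - 2) := by
          apply Nat.pow_le_pow_right (by norm_num)
          rw [hrest, Finset.card_sdiff_of_subset (by simp)]
          simp [Finset.card_insert_of_notMem, hij]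
  calc WF.card ≤ 2 * (WF.image restr).card := h1
    _ ≤ 2 * 3 ^ (n - 2) := by omega
end Counting

section MeasurePrelim

noncomputable def mBer : Measure ℝ :=
  ((2 : ℝ≥0∞)/3) • Measure.dirac 1 + ((1 : ℝ≥0∞)/3) • Measure.dirac 0

lemma ENN_third : (2 : ℝ≥0∞)/3 + 1/3 = 1 := by
  have h : (2:ℝ≥0∞) + 1 = 3 := by norm_num
  rw [ENNReal.div_add_div_same, h]
  exact ENNReal.div_self (by norm_num) (by norm_num)

lemma ofReal23 : ENNReal.ofReal ((2:ℝ)/3) = 2/3 := by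
  rw [ENNReal.ofReal_div_of_pos (by norm_num)]
  norm_num

lemma ENN23_ne_top : (2:ℝ≥0∞)/3 ≠ ⊤ := (ENNReal.div_lt_top (by norm_num) (by norm_num)).ne

instance : IsProbabilityMeasure mBer := by
  constructor
  simp only [mBer, Measure.add_apply, Measure.smul_apply, smul_eq_mul,
    Measure.dirac_apply' _ MeasurableSet.univ, Set.mem_univ, Set.indicator_of_mem,
    Pi.one_apply, mul_one]
  exact ENN_third

lemma mBer_apply {s : Set ℝ} (hs : MeasurableSet s) :
    mBer s = (if (1:ℝ) ∈ s then 2/3 else 0) + (if (0:ℝ) ∈ s then 1/3 else 0) := by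
  simp only [mBer, Measure.add_apply, Measure.smul_apply, smul_eq_mul,
    Measure.dirac_apply' _ hs, Set.indicator_apply]
  by_cases h1 : (1:ℝ) ∈ s <;> by_cases h0 : (0:ℝ) ∈ s <;> simp [h1, h0]

variable {Ω : Type*} [MeasurableSpace Ω] {μ : Measure Ω} [IsProbabilityMeasure μ]

lemma marg_eq (b : Ω → ℝ) (hb : Measurable b) (hv : ∀ ω, b ω = 0 ∨ b ω = 1)
    (hp : μ {ω | b ω = 1} = 2/3) :
    μ.map b = mBer := by
  have hB1 : MeasurableSet {ω | b ω = 1} := hb (measurableSet_singleton 1)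
  have hB0 : {ω | b ω = 0} = {ω | b ω = 1}ᶜ := by
    ext ω; rcases hv ω with h | h <;> simp [h]
  have hp0 : μ {ω | b ω = 0} = 1/3 := by
    rw [hB0, measure_compl hB1 (measure_ne_top _ _), hp, measure_univ]
    exact ENNReal.sub_eq_of_eq_add ENN23_ne_top (by rw [add_comm, ENN_third])
  ext s hs
  rw [Measure.map_apply hb hs, mBer_apply hs]
  have hsplit := measure_inter_add_diff (μ := μ) (b ⁻¹' s) hB1
  have e1 : b ⁻¹' s ∩ {ω | b ω = 1} = if (1:ℝ) ∈ s then {ω | b ω = 1} else ∅ := by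
    by_cases h1 : (1:ℝ) ∈ s <;> simp only [h1, if_true, if_false]
    · ext ω; simp only [Set.mem_inter_iff, Set.mem_preimage, Set.mem_setOf_eq]
      exact ⟨fun h => h.2, fun h => ⟨h ▸ h1, h⟩⟩
    · ext ω; simp only [Set.mem_inter_iff, Set.mem_preimage, Set.mem_setOf_eq]
      constructor
      · rintro ⟨hm, he⟩; exact absurd (he ▸ hm) h1
      · exact fun h => h.elim
  have e0 : b ⁻¹' s \ {ω | b ω = 1} = if (0:ℝ) ∈ s then {ω | b ω = 0} else ∅ := by
    rw [Set.diff_eq, ← hB0]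
    by_cases h0 : (0:ℝ) ∈ s <;> simp only [h0, if_true, if_false]
    · ext ω; simp only [Set.mem_inter_iff, Set.mem_preimage, Set.mem_setOf_eq]
      exact ⟨fun h => h.2, fun h => ⟨h ▸ h0, h⟩⟩
    · ext ω; simp only [Set.mem_inter_iff, Set.mem_preimage, Set.mem_setOf_eq]
      constructor
      · rintro ⟨hm, he⟩; exact absurd (he ▸ hm) h0
      · exact fun h => h.elim
  rw [← hsplit, e1, e0]
  by_cases h1 : (1:ℝ) ∈ s <;> by_cases h0 : (0:ℝ) ∈ s <;>
    simp [h1, h0, hp, hp0]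

end MeasurePrelim

section Uni3

noncomputable def uni3 : Measure (Fin 3) :=
  ((1:ℝ≥0∞)/3) • (Measure.dirac 0 + Measure.dirac 1 + Measure.dirac 2)

lemma ENN_onethird_mul3 : (1:ℝ≥0∞)/3 * 3 = 1 := by
  rw [one_div, ENNReal.inv_mul_cancel (by norm_num) (by norm_num)]

instance : IsProbabilityMeasure uni3 := by
  constructor
  simp only [uni3, Measure.smul_apply, Measure.add_apply,
    Measure.dirac_apply' _ MeasurableSet.univ, Set.mem_univ, Set.indicator_of_mem,
    Pi.one_apply, smul_eq_mul]
  rw [show (1:ℝ≥0∞) + 1 + 1 = 3 by norm_num, ENN_onethird_mul3]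

lemma uni3_singleton (x : Fin 3) : uni3 {x} = 1/3 := by
  have hs : MeasurableSet ({x} : Set (Fin 3)) := measurableSet_singleton x
  simp only [uni3, Measure.smul_apply, Measure.add_apply,
    Measure.dirac_apply' _ hs, Set.indicator_apply, Set.mem_singleton_iff, smul_eq_mul]
  fin_cases x <;> norm_num [Fin.ext_iff]

lemma uni3_map (k : Fin 3) :
    uni3.map (fun a => if a = k then (0:ℝ) else 1) = mBer := by
  have hg : Measurable (fun a : Fin 3 => if a = k then (0:ℝ) else 1) :=
    measurable_of_countable _
  have hmap : uni3.map (fun a => if a = k then (0:ℝ) else 1)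
      = ((1:ℝ≥0∞)/3) • (Measure.dirac (if (0:Fin 3) = k then (0:ℝ) else 1)
          + Measure.dirac (if (1:Fin 3) = k then (0:ℝ) else 1)
          + Measure.dirac (if (2:Fin 3) = k then (0:ℝ) else 1)) := by
    rw [uni3, Measure.map_smul, Measure.map_add _ _ hg, Measure.map_add _ _ hg,
      Measure.map_dirac' hg, Measure.map_dirac' hg, Measure.map_dirac' hg]
  have hsc : (1:ℝ≥0∞)/3 + 1/3 = 2/3 := by
    rw [ENNReal.div_add_div_same]; norm_num
  have c1 : ((1:ℝ≥0∞)/3) • (Measure.dirac (0:ℝ) + Measure.dirac 1 + Measure.dirac 1)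
      = mBer := by
    rw [smul_add, smul_add, add_assoc, ← add_smul, hsc, mBer, add_comm]
  have c2 : ((1:ℝ≥0∞)/3) • (Measure.dirac (1:ℝ) + Measure.dirac 0 + Measure.dirac 1)
      = mBer := by
    rw [show Measure.dirac (1:ℝ) + Measure.dirac 0 + Measure.dirac 1
        = Measure.dirac (0:ℝ) + Measure.dirac 1 + Measure.dirac 1 by
      abel]
    exact c1
  have c3 : ((1:ℝ≥0∞)/3) • (Measure.dirac (1:ℝ) + Measure.dirac 1 + Measure.dirac 0)
      = mBer := by
    rw [show Measure.dirac (1:ℝ) + Measure.dirac 1 + Measure.dirac 0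
        = Measure.dirac (0:ℝ) + Measure.dirac 1 + Measure.dirac 1 by
      rw [add_comm, ← add_assoc]]
    exact c1
  rw [hmap]
  fin_cases k
  · exact c1
  · exact c2
  · exact c3

end Uni3

section Transfer

variable {Ω : Type*} [MeasurableSpace Ω] {μ : Measure Ω} [IsProbabilityMeasure μ]

lemma map_beta_pi (β : ℕ → Ω → ℝ) (hmeas : ∀ i, Measurable (β i))
    (hindep : iIndepFun β μ)
    (hmarg : ∀ i, μ.map (β i) = mBer) (n : ℕ) :
    μ.map (fun ω (i : Fin n) => β i ω) = Measure.pi (fun _ => mBer) := by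
  refine (Measure.pi_eq fun s hs => ?_).symm
  have hA : MeasurableSet (Set.univ.pi s) := MeasurableSet.univ_pi hs
  have hΦ : Measurable (fun ω (i : Fin n) => β i ω) :=
    measurable_pi_lambda _ fun i => hmeas i
  rw [Measure.map_apply hΦ hA]
  classical
  set sets : ℕ → Set ℝ := fun i => if h : i < n then s ⟨i, h⟩ else Set.univ with hsets
  have hpre : (fun ω (i : Fin n) => β i ω) ⁻¹' (Set.univ.pi s)
      = ⋂ i ∈ Finset.range n, β i ⁻¹' sets i := by
    ext ω
    simp only [Set.mem_preimage, Set.mem_univ_pi, Set.mem_iInter, Finset.mem_range, hsets]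
    constructor
    · intro h i hi
      rw [dif_pos hi]
      exact h ⟨i, hi⟩
    · intro h i
      have := h i.1 i.2
      rwa [dif_pos i.2, Fin.eta] at this
  rw [hpre, hindep.measure_inter_preimage_eq_mul (Finset.range n)
    (fun i _ => by
      by_cases h : i < n
      · rw [hsets]; simp only [dif_pos h]; exact hs _
      · rw [hsets]; simp only [dif_neg h]; exact MeasurableSet.univ)]
  have : ∀ i ∈ Finset.range n, μ (β i ⁻¹' sets i) = mBer (sets i) := by
    intro i _
    rw [← hmarg i, Measure.map_apply (hmeas i)]
    by_cases h : i < n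
    · rw [hsets]; simp only [dif_pos h]; exact hs _
    · rw [hsets]; simp only [dif_neg h]; exact MeasurableSet.univ
  rw [Finset.prod_congr rfl this, ← Fin.prod_univ_eq_prod_range (fun i => mBer (sets i)) n]
  exact Finset.prod_congr rfl (fun i _ => by rw [hsets]; simp only [dif_pos i.2, Fin.eta])

lemma map_color_pi (n : ℕ) (k : Fin 3) :
    (Measure.pi (fun _ : Fin n => uni3)).map
        (fun u (i : Fin n) => if u i = k then (0:ℝ) else 1)
      = Measure.pi (fun _ => mBer) := by
  have hgm : Measurable (fun a : Fin 3 => if a = k then (0:ℝ) else 1) :=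
    measurable_of_countable _
  refine (Measure.pi_eq fun s hs => ?_).symm
  have hA : MeasurableSet (Set.univ.pi s) := MeasurableSet.univ_pi hs
  have hΦ : Measurable (fun (u : Fin n → Fin 3) (i : Fin n) => if u i = k then (0:ℝ) else 1) :=
    measurable_pi_lambda _ fun i => hgm.comp (measurable_pi_apply i)
  rw [Measure.map_apply hΦ hA]
  have hpre : (fun u (i : Fin n) => if u i = k then (0:ℝ) else 1) ⁻¹' (Set.univ.pi s)
      = Set.univ.pi (fun i => (fun a : Fin 3 => if a = k then (0:ℝ) else 1) ⁻¹' s i) := by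
    ext u
    simp [Set.mem_univ_pi]
  rw [hpre, Measure.pi_pi]
  exact Finset.prod_congr rfl fun i _ => by
    rw [← Measure.map_apply hgm (hs i), uni3_map]

end Transfer

section Core

variable {Ω : Type*} [MeasurableSpace Ω] {μ : Measure Ω} [IsProbabilityMeasure μ]

lemma ENN_pow_arith (n : ℕ) (hn : 2 ≤ n) :
    ((2 * 3 ^ (n - 2) : ℕ) : ℝ≥0∞) * ((1:ℝ≥0∞)/3) ^ n = 2/9 := by
  obtain ⟨m, rfl⟩ : ∃ m, n = m + 2 := ⟨n - 2, by omega⟩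
  push_cast
  rw [pow_add]
  have h1 : ((1:ℝ≥0∞)/3) ^ m * (3:ℝ≥0∞) ^ m = 1 := by
    rw [← mul_pow, one_div, ENNReal.inv_mul_cancel (by norm_num) (by norm_num), one_pow]
  have h2 : ((1:ℝ≥0∞)/3) ^ 2 = 1/9 := by
    rw [one_div, ← ENNReal.inv_pow, show (3:ℝ≥0∞)^2 = 9 by norm_num, one_div]
  calc (2:ℝ≥0∞) * 3 ^ m * (((1:ℝ≥0∞)/3) ^ m * ((1:ℝ≥0∞)/3) ^ 2)
      = 2 * (((1:ℝ≥0∞)/3) ^ m * (3:ℝ≥0∞) ^ m) * ((1:ℝ≥0∞)/3) ^ 2 := by ring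
    _ = 2 * (1/9) := by rw [h1, h2, mul_one]
    _ = 2/9 := by rw [one_div, ENNReal.div_eq_inv_mul, mul_comm 2 _, mul_comm]
      
lemma triple_meas_ineq {α : Type*} [MeasurableSpace α] (ν : Measure α)
    [IsProbabilityMeasure ν] {A B C : Set α} (hA : MeasurableSet A)
    (hB : MeasurableSet B) (hC : MeasurableSet C) :
    ν A + ν B + ν C ≤ 2 + ν (A ∩ B ∩ C) := by
  have h1 : ν A + ν B ≤ 1 + ν (A ∩ B) := by
    rw [← measure_union_add_inter A hB]
    exact add_le_add_left (prob_le_one (μ := ν)) _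
  have h2 : ν (A ∩ B) + ν C ≤ 1 + ν (A ∩ B ∩ C) := by
    rw [← measure_union_add_inter (A ∩ B) hC]
    exact add_le_add_left (prob_le_one (μ := ν)) _
  calc ν A + ν B + ν C ≤ 1 + ν (A ∩ B) + ν C := add_le_add_left h1 _
    _ = 1 + (ν (A ∩ B) + ν C) := by ring
    _ ≤ 1 + (1 + ν (A ∩ B ∩ C)) := add_le_add_right h2 _
    _ = 2 + ν (A ∩ B ∩ C) := by ring

lemma finite_core (β : ℕ → Ω → ℝ) (hmeas : ∀ i, Measurable (β i))
    (hindep : iIndepFun β μ)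
    (hmarg : ∀ i, μ.map (β i) = mBer)
    (n : ℕ) (d : Fin n → ℝ) (ε : ℝ) (hsum : ∑ i, d i = 1 - ε)
    (i₀ j₀ : Fin n) (hij : i₀ ≠ j₀) (hdi : ε < d i₀) (hdj : ε < d j₀) :
    μ {ω | 2/3 - ε ≤ ∑ i : Fin n, d i * β i ω} ≤ 20/27 := by
  classical
  have hn2 : 2 ≤ n := by
    have h1 := i₀.isLt
    have h2 := j₀.isLt
    have h3 : i₀.val ≠ j₀.val := fun h => hij (Fin.ext h)
    omega
  -- the target set in ℝ^n
  set A : Set (Fin n → ℝ) := {x | 2/3 - ε ≤ ∑ i, d i * x i} with hAdef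
  have hFmeas : Measurable (fun x : Fin n → ℝ => ∑ i, d i * x i) :=
    Finset.measurable_sum _ (fun i _ => (measurable_pi_apply i).const_mul _)
  have hA : MeasurableSet A := measurableSet_le measurable_const hFmeas
  -- transfer to the product measure
  have hΦ : Measurable (fun ω (i : Fin n) => β i ω) :=
    measurable_pi_lambda _ fun i => hmeas i
  have h1 : μ {ω | 2/3 - ε ≤ ∑ i : Fin n, d i * β i ω}
      = Measure.pi (fun _ : Fin n => mBer) A := by
    have e1 := Measure.map_apply (μ := μ) hΦ hA
    rw [map_beta_pi β hmeas hindep hmarg n] at e1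
    rw [e1]
    rfl
  -- color side
  set ν : Measure (Fin n → Fin 3) := Measure.pi (fun _ => uni3) with hν
  set L : Fin 3 → (Fin n → Fin 3) → ℝ :=
    fun k u => ∑ i, d i * (if u i = k then 1 else 0) with hL
  set D : Fin 3 → Set (Fin n → Fin 3) := fun k => {u | L k u ≤ 1/3} with hD
  have hLsum : ∀ u, L 0 u + L 1 u + L 2 u = 1 - ε := by
    intro u
    rw [hL]
    simp only
    rw [← Finset.sum_add_distrib, ← Finset.sum_add_distrib, ← hsum]
    apply Finset.sum_congr rfl
    intro i _
    rw [← mul_add, ← mul_add]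
    have : (if u i = 0 then (1:ℝ) else 0) + (if u i = 1 then 1 else 0)
        + (if u i = 2 then 1 else 0) = 1 := by
      generalize u i = a
      fin_cases a <;> norm_num [Fin.ext_iff]
    rw [this, mul_one]
  have h2 : ∀ k, Measure.pi (fun _ : Fin n => mBer) A = ν (D k) := by
    intro k
    have hΨ : Measurable (fun (u : Fin n → Fin 3) (i : Fin n) =>
        if u i = k then (0:ℝ) else 1) :=
      measurable_pi_lambda _ fun i => by
        have hg : Measurable (fun a : Fin 3 => if a = k then (0:ℝ) else 1) :=
          measurable_of_countable _
        exact hg.comp (measurable_pi_apply i)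
    have e1 := Measure.map_apply (μ := Measure.pi (fun _ : Fin n => uni3)) hΨ hA
    rw [map_color_pi n k] at e1
    rw [e1]
    congr 1
    ext u
    simp only [Set.mem_preimage, hAdef, Set.mem_setOf_eq, hD, hL]
    have key : (∑ i, d i * (if u i = k then (0:ℝ) else 1)) = (1 - ε) - L k u := by
      rw [hL, eq_sub_iff_add_eq]
      simp only
      rw [← Finset.sum_add_distrib, ← hsum]
      apply Finset.sum_congr rfl
      intro i _
      rw [← mul_add]
      by_cases h : u i = k <;> simp [h]
    rw [key]
    constructor
    · intro h; linarith
    · intro h; linarith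
  -- all sets measurable (finite space)
  have hDm : ∀ k, MeasurableSet (D k) := fun k => (Set.toFinite _).measurableSet
  -- window
  set W : Set (Fin n → Fin 3) := {u | ∀ k, L k u ∈ Set.Icc (1/3 - ε) ((1/3 - ε) + ε)}
    with hW
  have hsub : D 0 ∩ D 1 ∩ D 2 ⊆ W := by
    intro u hu
    obtain ⟨⟨h0, h1'⟩, h2'⟩ := hu
    rw [hD] at h0 h1' h2'
    simp only [Set.mem_setOf_eq] at h0 h1' h2'
    have hls := hLsum u
    intro k
    have hub : L k u ≤ 1/3 := by
      fin_cases k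
      · exact h0
      · exact h1'
      · exact h2'
    have hlb : 1/3 - ε ≤ L k u := by
      fin_cases k
      · show 1/3 - ε ≤ L 0 u; linarith
      · show 1/3 - ε ≤ L 1 u; linarith
      · show 1/3 - ε ≤ L 2 u; linarith
    exact ⟨hlb, by linarith⟩
  -- counting bound for W
  set WF : Finset (Fin n → Fin 3) := Finset.univ.filter (fun u => ∀ k,
      L k u ∈ Set.Icc (1/3 - ε) ((1/3 - ε) + ε)) with hWF
  have hWcard : WF.card ≤ 2 * 3 ^ (n - 2) := by
    rw [hWF]
    exact window_card_le i₀ j₀ hij hdi hdj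
  have hWmeas : ν W ≤ 2/9 := by
    have hWeq : W = ⋃ u ∈ WF, {u} := by
      ext u
      simp only [hW, Set.mem_setOf_eq, Set.mem_iUnion, Set.mem_singleton_iff, hWF,
        Finset.mem_filter, Finset.mem_univ, true_and]
      constructor
      · intro h; exact ⟨u, h, rfl⟩
      · rintro ⟨v, hv, rfl⟩; exact hv
    have hsingle : ∀ u : Fin n → Fin 3, ν {u} = ((1:ℝ≥0∞)/3) ^ n := by
      intro u
      rw [hν, show ({u} : Set (Fin n → Fin 3)) = Set.univ.pi (fun i => {u i}) by
        rw [Set.univ_pi_singleton], Measure.pi_pi]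
      simp [uni3_singleton]
    calc ν W ≤ ∑ u ∈ WF, ν {u} := by rw [hWeq]; exact measure_biUnion_finset_le _ _
      _ = WF.card * ((1:ℝ≥0∞)/3) ^ n := by
          rw [Finset.sum_congr rfl (fun u _ => hsingle u), Finset.sum_const, nsmul_eq_mul]
      _ ≤ ((2 * 3 ^ (n - 2) : ℕ) : ℝ≥0∞) * ((1:ℝ≥0∞)/3) ^ n := by
          apply mul_le_mul_left
          exact_mod_cast Nat.cast_le.mpr hWcard
      _ = 2/9 := ENN_pow_arith n hn2
  -- combine
  set x : ℝ≥0∞ := Measure.pi (fun _ : Fin n => mBer) A with hx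
  have h3 : x + x + x ≤ 2 + 2/9 := by
    have hxx : ν (D 0) + ν (D 1) + ν (D 2) = x + x + x := by
      rw [← h2 0, ← h2 1, ← h2 2]
    calc x + x + x = ν (D 0) + ν (D 1) + ν (D 2) := hxx.symm
      _ ≤ 2 + ν (D 0 ∩ D 1 ∩ D 2) := triple_meas_ineq ν (hDm 0) (hDm 1) (hDm 2)
      _ ≤ 2 + ν W := add_le_add_right (measure_mono hsub) _
      _ ≤ 2 + 2/9 := add_le_add_right hWmeas _
  have hxle : x ≤ 20/27 := by
    have h3x : (3:ℝ≥0∞) * x ≤ 20/9 := by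
      calc (3:ℝ≥0∞) * x = x + x + x := by ring
        _ ≤ 2 + 2/9 := h3
        _ = 20/9 := by
            have h18 : (2:ℝ≥0∞) = 18/9 := by
              rw [show (18:ℝ≥0∞) = 2*9 by norm_num, mul_div_assoc,
                ENNReal.div_self (by norm_num) (by norm_num), mul_one]
            calc (2:ℝ≥0∞) + 2/9 = 18/9 + 2/9 := by rw [← h18]
              _ = 20/9 := by rw [ENNReal.div_add_div_same]; norm_num
    calc x = 3⁻¹ * (3 * x) := by
          rw [← mul_assoc, ENNReal.inv_mul_cancel (by norm_num) (by norm_num), one_mul]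
      _ ≤ 3⁻¹ * (20/9) := mul_le_mul_right h3x _
      _ = 20/27 := by
          rw [ENNReal.div_eq_inv_mul, ← mul_assoc, ENNReal.div_eq_inv_mul,
            ← ENNReal.mul_inv (by norm_num) (by norm_num)]
          norm_num
  rw [h1]
  exact hxle

end Core

section Main

variable {Ω : Type*} [MeasurableSpace Ω]

lemma conj1 (μ : Measure Ω) [IsProbabilityMeasure μ]
    (β : ℕ → Ω → ℝ) (hmeas : ∀ i, Measurable (β i))
    (hval : ∀ i ω, β i ω = 0 ∨ β i ω = 1)
    (hβp : ∀ i, μ {ω | β i ω = 1} = ENNReal.ofReal (2 / 3))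
    (hindep : iIndepFun β μ)
    (c : ℕ → ℝ) (hc : ∀ i, 0 ≤ c i) (hc1 : (∑' i, c i) = 1) :
    (μ {ω | (2 : ℝ) / 3 ≤ ∑' i, c i * β i ω}).toReal ≤ 20 / 27 := by
  have hmarg : ∀ i, μ.map (β i) = mBer := fun i =>
    marg_eq (β i) (hmeas i) (hval i) (by rw [hβp i, ofReal23])
  have hsc : Summable c := by
    by_contra h
    rw [tsum_eq_zero_of_not_summable h] at hc1
    norm_num at hc1
  have hβ01 : ∀ i ω, 0 ≤ β i ω ∧ β i ω ≤ 1 := by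
    intro i ω; rcases hval i ω with h | h <;> rw [h] <;> norm_num
  by_cases hex : ∃ a b, a ≠ b ∧ 0 < c a ∧ 0 < c b
  · obtain ⟨a, b, hab, hca, hcb⟩ := hex
    -- choose a large enough n
    have htends := hsc.hasSum.tendsto_sum_nat
    rw [hc1] at htends
    have hev := htends.eventually (eventually_gt_nhds
      (show 1 - min (c a) (c b) < 1 by
        have := lt_min hca hcb; linarith))
    obtain ⟨N, hN⟩ := Filter.eventually_atTop.mp hev
    set n := max N (max a b + 1) with hn
    have hNn : 1 - min (c a) (c b) < ∑ i ∈ Finset.range n, c i :=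
      hN n (le_max_left _ _)
    set ε : ℝ := 1 - ∑ i ∈ Finset.range n, c i with hε
    have hεa : ε < c a := by
      have : min (c a) (c b) ≤ c a := min_le_left _ _
      simp only [hε]; linarith
    have hεb : ε < c b := by
      have : min (c a) (c b) ≤ c b := min_le_right _ _
      simp only [hε]; linarith
    have han : a < n := by
      have : a < max a b + 1 := by
        have := le_max_left a b; omega
      omega
    have hbn : b < n := by
      have : b < max a b + 1 := by
        have := le_max_right a b; omega
      omega
    set d : Fin n → ℝ := fun i => c i with hd
    have hsum : ∑ i : Fin n, d i = 1 - ε := by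
      rw [hd, Fin.sum_univ_eq_sum_range (fun i => c i) n, hε]; ring
    set i₀ : Fin n := ⟨a, han⟩
    set j₀ : Fin n := ⟨b, hbn⟩
    have hij : i₀ ≠ j₀ := by
      intro h
      exact hab (congrArg Fin.val h)
    have hcore := finite_core (μ := μ) β hmeas hindep hmarg n d ε hsum i₀ j₀ hij hεa hεb
    -- event inclusion
    have hincl : {ω | (2 : ℝ) / 3 ≤ ∑' i, c i * β i ω}
        ⊆ {ω | 2/3 - ε ≤ ∑ i : Fin n, d i * β i ω} := by
      intro ω hω
      simp only [Set.mem_setOf_eq] at hω ⊢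
      have hsummable : Summable (fun i => c i * β i ω) := by
        apply Summable.of_nonneg_of_le
          (fun i => mul_nonneg (hc i) (hβ01 i ω).1)
          (fun i => by
            have := (hβ01 i ω).2
            calc c i * β i ω ≤ c i * 1 := by
                  apply mul_le_mul_of_nonneg_left this (hc i)
              _ = c i := mul_one _) hsc
      have hsplit := Summable.sum_add_tsum_subtype_compl hsummable (Finset.range n)
      have hsplitc := Summable.sum_add_tsum_subtype_compl hsc (Finset.range n)
      have htail : (∑' i : {x // x ∉ Finset.range n}, c i * β i ω)
          ≤ (∑' i : {x // x ∉ Finset.range n}, c i) := by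
        apply Summable.tsum_le_tsum _ (hsummable.subtype _) (hsc.subtype _)
        intro i
        calc c i * β i ω ≤ c i * 1 := by
              apply mul_le_mul_of_nonneg_left (hβ01 i ω).2 (hc i)
          _ = c i := mul_one _
      have htailc : (∑' i : {x // x ∉ Finset.range n}, c i) = ε := by
        rw [hε]; rw [← hc1]
        linarith [hsplitc]
      have hfin : (∑ i : Fin n, d i * β i ω) = ∑ i ∈ Finset.range n, c i * β i ω :=
        Fin.sum_univ_eq_sum_range (fun i => c i * β i ω) n
      rw [hfin]
      have h23 : (2:ℝ)/3 ≤ ∑' i, c i * β i ω := hω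
      linarith [htail, htailc, hsplit]
    calc (μ {ω | (2 : ℝ) / 3 ≤ ∑' i, c i * β i ω}).toReal
        ≤ ((20:ℝ≥0∞)/27).toReal := by
          apply ENNReal.toReal_mono
          · exact (ENNReal.div_lt_top (by norm_num) (by norm_num)).ne
          · exact le_trans (measure_mono hincl) hcore
      _ = 20/27 := by rw [ENNReal.toReal_div]; norm_num
  · -- degenerate case : at most one positive coefficient
    push_neg at hex
    have hipos : ∃ i, 0 < c i := by
      by_contra h
      push_neg at h
      have hz : ∀ i, c i = 0 := fun i => le_antisymm (h i) (hc i)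
      rw [tsum_congr hz, tsum_zero] at hc1
      norm_num at hc1
    obtain ⟨i₀, hi₀⟩ := hipos
    have hothers : ∀ j, j ≠ i₀ → c j = 0 := by
      intro j hj
      by_contra h
      exact absurd (hex j i₀ hj (lt_of_le_of_ne (hc j) (Ne.symm h))) (not_le.mpr hi₀)
    have hci₀ : c i₀ = 1 := by
      rw [← hc1, tsum_eq_single i₀ hothers]
    have hev : ∀ ω, (∑' i, c i * β i ω) = β i₀ ω := by
      intro ω
      rw [tsum_eq_single i₀ (fun j hj => by rw [hothers j hj, zero_mul]), hci₀, one_mul]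
    have hset : {ω | (2 : ℝ) / 3 ≤ ∑' i, c i * β i ω} = {ω | β i₀ ω = 1} := by
      ext ω
      simp only [Set.mem_setOf_eq, hev ω]
      rcases hval i₀ ω with h | h <;> rw [h] <;> norm_num
    rw [hset, hβp i₀, ENNReal.toReal_ofReal (by norm_num)]
    norm_num

end Main

section Main2

variable {Ω : Type*} [MeasurableSpace Ω]

lemma conj2 (μ : Measure Ω) [IsProbabilityMeasure μ]
    (β : ℕ → Ω → ℝ) (hmeas : ∀ i, Measurable (β i))
    (hval : ∀ i ω, β i ω = 0 ∨ β i ω = 1)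
    (hβp : ∀ i, μ {ω | β i ω = 1} = ENNReal.ofReal (2 / 3))
    (hindep : iIndepFun β μ) :
    (μ {ω | (2 : ℝ) / 3 ≤
        ∑' i, (if i < 3 then (1 : ℝ) / 3 else 0) * β i ω}).toReal = 20 / 27 := by
  classical
  have hmarg : ∀ i, μ.map (β i) = mBer := fun i =>
    marg_eq (β i) (hmeas i) (hval i) (by rw [hβp i, ofReal23])
  have hμ1 : ∀ i, μ (β i ⁻¹' {1}) = 2/3 := fun i => by
    rw [← Measure.map_apply (hmeas i) (measurableSet_singleton _), hmarg i,
      mBer_apply (measurableSet_singleton _)]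
    norm_num
  have hμ0 : ∀ i, μ (β i ⁻¹' {0}) = 1/3 := fun i => by
    rw [← Measure.map_apply (hmeas i) (measurableSet_singleton _), hmarg i,
      mBer_apply (measurableSet_singleton _)]
    norm_num
  have hatom : ∀ s0 s1 s2 : Set ℝ, MeasurableSet s0 → MeasurableSet s1 → MeasurableSet s2 →
      μ (β 0 ⁻¹' s0 ∩ (β 1 ⁻¹' s1 ∩ β 2 ⁻¹' s2))
        = μ (β 0 ⁻¹' s0) * μ (β 1 ⁻¹' s1) * μ (β 2 ⁻¹' s2) := by
    intro s0 s1 s2 h0 h1 h2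
    set sets : ℕ → Set ℝ := fun i => if i = 0 then s0 else if i = 1 then s1 else s2 with hsets
    have hform := hindep.measure_inter_preimage_eq_mul (Finset.range 3)
      (sets := sets) (fun i _ => by
        rw [hsets]; dsimp only; split_ifs <;> assumption)
    have hset1 : (⋂ i ∈ Finset.range 3, β i ⁻¹' sets i)
        = β 0 ⁻¹' s0 ∩ (β 1 ⁻¹' s1 ∩ β 2 ⁻¹' s2) := by
      ext ω
      simp only [Set.mem_iInter, Finset.mem_range, Set.mem_inter_iff, Set.mem_preimage]
      constructor
      · intro h
        refine ⟨?_, ?_, ?_⟩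
        · simpa [hsets] using h 0 (by norm_num)
        · simpa [hsets] using h 1 (by norm_num)
        · simpa [hsets] using h 2 (by norm_num)
      · rintro ⟨ha, hb, hc⟩ i hi
        interval_cases i
        · simpa [hsets] using ha
        · simpa [hsets] using hb
        · simpa [hsets] using hc
    rw [hset1] at hform
    rw [hform, Finset.prod_range_succ, Finset.prod_range_succ, Finset.prod_range_one]
    have e0 : sets 0 = s0 := by simp [hsets]
    have e1 : sets 1 = s1 := by simp [hsets]
    have e2 : sets 2 = s2 := by simp [hsets]
    rw [e0, e1, e2]
  -- tsum collapse
  have ht : ∀ ω, (∑' i, (if i < 3 then (1:ℝ)/3 else 0) * β i ω)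
      = (β 0 ω + β 1 ω + β 2 ω)/3 := by
    intro ω
    rw [tsum_eq_sum (s := Finset.range 3)
      (by intro i hi; rw [if_neg (by simpa using hi), zero_mul])]
    rw [Finset.sum_range_succ, Finset.sum_range_succ, Finset.sum_range_succ,
      Finset.sum_range_zero]
    norm_num
    ring
  -- atoms
  set A1 : Set Ω := β 0 ⁻¹' {1} with hA1
  set A0 : Set Ω := β 0 ⁻¹' {0} with hA0
  set B1 : Set Ω := β 1 ⁻¹' {1} with hB1
  set B0 : Set Ω := β 1 ⁻¹' {0} with hB0
  set C1 : Set Ω := β 2 ⁻¹' {1} with hC1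
  set C0 : Set Ω := β 2 ⁻¹' {0} with hC0
  have hEeq : {ω | (2:ℝ)/3 ≤ ∑' i, (if i < 3 then (1:ℝ)/3 else 0) * β i ω}
      = (A1 ∩ (B1 ∩ C1)) ∪ ((A1 ∩ (B1 ∩ C0)) ∪ ((A1 ∩ (B0 ∩ C1)) ∪ (A0 ∩ (B1 ∩ C1)))) := by
    ext ω
    simp only [Set.mem_setOf_eq, ht ω, Set.mem_union, Set.mem_inter_iff, Set.mem_preimage,
      hA1, hA0, hB1, hB0, hC1, hC0, Set.mem_singleton_iff]
    rcases hval 0 ω with h0 | h0 <;> rcases hval 1 ω with h1 | h1 <;>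
      rcases hval 2 ω with h2 | h2 <;> rw [h0, h1, h2] <;> norm_num
  have hdj : ∀ i : ℕ, Disjoint (β i ⁻¹' {1} : Set Ω) (β i ⁻¹' {0}) := by
    intro i
    rw [Set.disjoint_left]
    intro ω hx hy
    simp only [Set.mem_preimage, Set.mem_singleton_iff] at hx hy
    rw [hx] at hy
    norm_num at hy
  have hmA1 : MeasurableSet A1 := (hmeas 0) (measurableSet_singleton _)
  have hmA0 : MeasurableSet A0 := (hmeas 0) (measurableSet_singleton _)
  have hmB1 : MeasurableSet B1 := (hmeas 1) (measurableSet_singleton _)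
  have hmB0 : MeasurableSet B0 := (hmeas 1) (measurableSet_singleton _)
  have hmC1 : MeasurableSet C1 := (hmeas 2) (measurableSet_singleton _)
  have hmC0 : MeasurableSet C0 := (hmeas 2) (measurableSet_singleton _)
  have hP1C : A1 ∩ (B1 ∩ C1) ⊆ C1 := Set.Subset.trans Set.inter_subset_right Set.inter_subset_right
  have hP2C : A1 ∩ (B1 ∩ C0) ⊆ C0 := Set.Subset.trans Set.inter_subset_right Set.inter_subset_right
  have hP1B : A1 ∩ (B1 ∩ C1) ⊆ B1 := Set.Subset.trans Set.inter_subset_right Set.inter_subset_left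
  have hP2B : A1 ∩ (B1 ∩ C0) ⊆ B1 := Set.Subset.trans Set.inter_subset_right Set.inter_subset_left
  have hP3B : A1 ∩ (B0 ∩ C1) ⊆ B0 := Set.Subset.trans Set.inter_subset_right Set.inter_subset_left
  have hP1A : A1 ∩ (B1 ∩ C1) ⊆ A1 := Set.inter_subset_left
  have hP2A : A1 ∩ (B1 ∩ C0) ⊆ A1 := Set.inter_subset_left
  have hP3A : A1 ∩ (B0 ∩ C1) ⊆ A1 := Set.inter_subset_left
  have hP4A : A0 ∩ (B1 ∩ C1) ⊆ A0 := Set.inter_subset_left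
  have hd12 : Disjoint (A1 ∩ (B1 ∩ C1)) (A1 ∩ (B1 ∩ C0)) := (hdj 2).mono hP1C hP2C
  have hd13 : Disjoint (A1 ∩ (B1 ∩ C1)) (A1 ∩ (B0 ∩ C1)) := (hdj 1).mono hP1B hP3B
  have hd14 : Disjoint (A1 ∩ (B1 ∩ C1)) (A0 ∩ (B1 ∩ C1)) := (hdj 0).mono hP1A hP4A
  have hd23 : Disjoint (A1 ∩ (B1 ∩ C0)) (A1 ∩ (B0 ∩ C1)) := (hdj 1).mono hP2B hP3B
  have hd24 : Disjoint (A1 ∩ (B1 ∩ C0)) (A0 ∩ (B1 ∩ C1)) := (hdj 0).mono hP2A hP4A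
  have hd34 : Disjoint (A1 ∩ (B0 ∩ C1)) (A0 ∩ (B1 ∩ C1)) := (hdj 0).mono hP3A hP4A
  have hm1 : MeasurableSet (A1 ∩ (B1 ∩ C1)) := hmA1.inter (hmB1.inter hmC1)
  have hm2 : MeasurableSet (A1 ∩ (B1 ∩ C0)) := hmA1.inter (hmB1.inter hmC0)
  have hm3 : MeasurableSet (A1 ∩ (B0 ∩ C1)) := hmA1.inter (hmB0.inter hmC1)
  have hm4 : MeasurableSet (A0 ∩ (B1 ∩ C1)) := hmA0.inter (hmB1.inter hmC1)
  rw [hEeq,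
    measure_union (Set.disjoint_union_right.mpr
      ⟨hd12, Set.disjoint_union_right.mpr ⟨hd13, hd14⟩⟩) (hm2.union (hm3.union hm4)),
    measure_union (Set.disjoint_union_right.mpr ⟨hd23, hd24⟩) (hm3.union hm4),
    measure_union hd34 hm4]
  rw [hA1, hA0, hB1, hB0, hC1, hC0,
    hatom _ _ _ (measurableSet_singleton _) (measurableSet_singleton _) (measurableSet_singleton _),
    hatom _ _ _ (measurableSet_singleton _) (measurableSet_singleton _) (measurableSet_singleton _),
    hatom _ _ _ (measurableSet_singleton _) (measurableSet_singleton _) (measurableSet_singleton _),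
    hatom _ _ _ (measurableSet_singleton _) (measurableSet_singleton _) (measurableSet_singleton _),
    hμ1 0, hμ1 1, hμ1 2, hμ0 0, hμ0 1, hμ0 2]
  have hne : ((2:ℝ≥0∞)/3) ≠ ⊤ := ENN23_ne_top
  have hne' : ((1:ℝ≥0∞)/3) ≠ ⊤ := (ENNReal.div_lt_top (by norm_num) (by norm_num)).ne
  have hmul_ne : ∀ a b c : ℝ≥0∞, a ≠ ⊤ → b ≠ ⊤ → c ≠ ⊤ → a * b * c ≠ ⊤ := by
    intro a b c ha hb hc
    exact ENNReal.mul_ne_top (ENNReal.mul_ne_top ha hb) hc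
  rw [ENNReal.toReal_add (hmul_ne _ _ _ hne hne hne)
      (ENNReal.add_ne_top.mpr ⟨hmul_ne _ _ _ hne hne hne',
        ENNReal.add_ne_top.mpr ⟨hmul_ne _ _ _ hne hne' hne, hmul_ne _ _ _ hne' hne hne⟩⟩),
    ENNReal.toReal_add (hmul_ne _ _ _ hne hne hne')
      (ENNReal.add_ne_top.mpr ⟨hmul_ne _ _ _ hne hne' hne, hmul_ne _ _ _ hne' hne hne⟩),
    ENNReal.toReal_add (hmul_ne _ _ _ hne hne' hne) (hmul_ne _ _ _ hne' hne hne)]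
  simp only [ENNReal.toReal_mul, ENNReal.toReal_div, ENNReal.toReal_ofNat, ENNReal.toReal_one]
  norm_num

end Main2


/-- **Bold play is not optimal at `p = t = 2/3`.** For iid Bernoulli(2/3) random
variables, the maximum of `P(∑ c i * β i ≥ 2/3)` over nonnegative sequences summing
to `1` is attained by `c 0 = c 1 = c 2 = 1/3`; it equals
`P(Bin(3, 2/3) ≥ 2) = 20/27`, which exceeds the bold play value `2/3`. -/
theorem three_equal_stakes_optimal_at_two_thirds {Ω : Type*} [MeasurableSpace Ω]
    (μ : Measure Ω) [IsProbabilityMeasure μ]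
    (β : ℕ → Ω → ℝ) (hmeas : ∀ i, Measurable (β i))
    (hval : ∀ i ω, β i ω = 0 ∨ β i ω = 1)
    (hβp : ∀ i, μ {ω | β i ω = 1} = ENNReal.ofReal (2 / 3))
    (hindep : iIndepFun β μ) :
    (∀ c : ℕ → ℝ, (∀ i, 0 ≤ c i) → (∑' i, c i) = 1 →
      (μ {ω | (2 : ℝ) / 3 ≤ ∑' i, c i * β i ω}).toReal ≤ 20 / 27) ∧
    (μ {ω | (2 : ℝ) / 3 ≤
        ∑' i, (if i < 3 then (1 : ℝ) / 3 else 0) * β i ω}).toReal = 20 / 27 ∧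
    (∑ j ∈ Finset.Icc 2 3, (Nat.choose 3 j : ℝ) * (2 / 3) ^ j * (1 / 3) ^ (3 - j))
      = 20 / 27 ∧
    (2 : ℝ) / 3 < 20 / 27 := by
  refine ⟨fun c hc hc1 => conj1 μ β hmeas hval hβp hindep c hc hc1,
    conj2 μ β hmeas hval hβp hindep, ?_, by norm_num⟩
  rw [show Finset.Icc 2 3 = ({2, 3} : Finset ℕ) from rfl,
    Finset.sum_pair (by norm_num : (2:ℕ) ≠ 3)]
  norm_num [Nat.choose]
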